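/- Let (X_i) be an ε-ranking supermartingale with ε > 0 with respect to a stopping time T, with E[X_0] < ∞. Then E[T] ≤ E[X_0]/ε. -/

import Mathlib

open MeasureTheory Filter
open scoped ENNReal

lemma enat_coe_eq_tsum (n : ℕ∞) :
    (n : ℝ≥0∞) = ∑' i : ℕ, if (i : ℕ∞) < n then (1 : ℝ≥0∞) else 0 := by
  cases n with
  | top =>
    have h : ∀ i : ℕ, (if (i : ℕ∞) < ⊤ then (1 : ℝ≥0∞) else 0) = 1 := by
      intro i; simp [lt_top_iff_ne_top]
    simp only [h]
    rw [ENNReal.tsum_const_eq_top_of_ne_zero one_ne_zero]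
    simp
  | coe m =>
    rw [tsum_eq_sum (s := Finset.range m) (by intro i hi; simp at hi; simp [hi])]
    have h : ∀ i ∈ Finset.range m, (if (i : ℕ∞) < (m : ℕ∞) then (1 : ℝ≥0∞) else 0) = 1 := by
      intro i hi; simp at hi; simp [hi]
    rw [Finset.sum_congr rfl h]
    simp

/-- For an ε-RSM `X` (ε > 0) with respect to a stopping time `T`,
`E[T] ≤ E[X 0] / ε`. -/
theorem rsm_expected_stopping_time_bound
    {Ω : Type*} {m0 : MeasurableSpace Ω} {μ : Measure Ω} [IsProbabilityMeasure μ]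
    (ℱ : Filtration ℕ m0) (X : ℕ → Ω → ℝ) (T : Ω → ℕ∞) (ε : ℝ) (hε : 0 < ε)
    (hstop : ∀ i : ℕ, MeasurableSet[ℱ i] {ω | T ω ≤ (i : ℕ∞)})
    (hadapted : Adapted ℱ X)
    (hint : ∀ i, Integrable (X i) μ)
    (hnonneg : ∀ i ω, 0 ≤ X i ω)
    (hdec : ∀ i : ℕ, ∀ ω : Ω,
      (μ[X (i + 1) | ℱ i]) ω ≤ X i ω - ε * Set.indicator {ω | (i : ℕ∞) < T ω} (fun _ => 1) ω) :
    ∫⁻ ω, (T ω : ℝ≥0∞) ∂μ ≤ ENNReal.ofReal ((∫ ω, X 0 ω ∂μ) / ε) := by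
  set s : ℕ → Set Ω := fun i => {ω | (i : ℕ∞) < T ω} with hs_def
  have hs : ∀ i, MeasurableSet (s i) := by
    intro i
    have : s i = {ω | T ω ≤ (i : ℕ∞)}ᶜ := by
      ext ω; simp [hs_def, not_le]
    rw [this]
    exact (ℱ.le i _ (hstop i)).compl
  -- the indicator function is integrable
  have hind_int : ∀ i, Integrable (fun ω => ε * Set.indicator (s i) (fun _ => (1:ℝ)) ω) μ :=
    fun i => ((integrable_const (1:ℝ)).indicator (hs i)).const_mul ε
  -- one-step decrease of expectations
  have hstep : ∀ i : ℕ, ∫ ω, X (i+1) ω ∂μ ≤ ∫ ω, X i ω ∂μ - ε * (μ (s i)).toReal := by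
    intro i
    have h1 : ∫ ω, X (i+1) ω ∂μ = ∫ ω, (μ[X (i+1) | ℱ i]) ω ∂μ :=
      (integral_condExp (ℱ.le i)).symm
    have h2 : ∫ ω, (μ[X (i+1) | ℱ i]) ω ∂μ ≤
        ∫ ω, (X i ω - ε * Set.indicator (s i) (fun _ => (1:ℝ)) ω) ∂μ :=
      integral_mono integrable_condExp ((hint i).sub (hind_int i)) (hdec i)
    have h3 : ∫ ω, (X i ω - ε * Set.indicator (s i) (fun _ => (1:ℝ)) ω) ∂μ
        = ∫ ω, X i ω ∂μ - ε * (μ (s i)).toReal := by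
      rw [integral_sub (hint i) (hind_int i), integral_const_mul,
        integral_indicator_const (1:ℝ) (hs i)]
      simp [Measure.real]
    rw [h1]; rw [h3] at h2; exact h2
  -- partial sums bound
  have hsum : ∀ n : ℕ, ∫ ω, X n ω ∂μ + ε * ∑ i ∈ Finset.range n, (μ (s i)).toReal
      ≤ ∫ ω, X 0 ω ∂μ := by
    intro n
    induction n with
    | zero => simp
    | succ n ih =>
      rw [Finset.sum_range_succ, mul_add]
      have := hstep n
      linarith
  have hsum' : ∀ n : ℕ, ∑ i ∈ Finset.range n, (μ (s i)).toReal ≤ (∫ ω, X 0 ω ∂μ) / ε := by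
    intro n
    rw [le_div_iff₀ hε]
    have h0 : 0 ≤ ∫ ω, X n ω ∂μ := integral_nonneg (hnonneg n)
    have := hsum n
    nlinarith
  -- rewrite the lintegral as a tsum
  have hT : ∀ ω, (T ω : ℝ≥0∞) = ∑' i : ℕ, Set.indicator (s i) (fun _ => (1:ℝ≥0∞)) ω := by
    intro ω
    rw [enat_coe_eq_tsum]
    congr 1; ext i
    simp [Set.indicator_apply, hs_def, Set.mem_setOf_eq]
  calc ∫⁻ ω, (T ω : ℝ≥0∞) ∂μ
      = ∫⁻ ω, ∑' i : ℕ, Set.indicator (s i) (fun _ => (1:ℝ≥0∞)) ω ∂μ := by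
        exact lintegral_congr hT
    _ = ∑' i : ℕ, ∫⁻ ω, Set.indicator (s i) (fun _ => (1:ℝ≥0∞)) ω ∂μ :=
        lintegral_tsum (fun i => (measurable_const.indicator (hs i)).aemeasurable)
    _ = ∑' i : ℕ, μ (s i) := by
        refine tsum_congr fun i => ?_
        simp [lintegral_indicator, hs i]
    _ ≤ ENNReal.ofReal ((∫ ω, X 0 ω ∂μ) / ε) := by
        apply ENNReal.tsum_le_of_sum_range_le
        intro n
        have : ∑ i ∈ Finset.range n, μ (s i)
            = ENNReal.ofReal (∑ i ∈ Finset.range n, (μ (s i)).toReal) := by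
          rw [ENNReal.ofReal_sum_of_nonneg (fun i _ => ENNReal.toReal_nonneg)]
          exact Finset.sum_congr rfl fun i _ => (ENNReal.ofReal_toReal (measure_ne_top μ _)).symm
        rw [this]
        exact ENNReal.ofReal_le_ofReal (hsum' n)
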